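/- Let Π⁺_0, Π⁻_0, Π⁺_1, Π⁻_1 be orthogonal projections on a finite-dimensional complex Hilbert space H with Π⁺_0 + Π⁻_0 = I and Π⁺_1 + Π⁻_1 = I. Then there exists an orthogonal direct sum decomposition H = ⊕_s H^s with dim H^s ≤ 2 for every s, such that each of the four projections leaves every subspace H^s invariant (i.e., all four projections are simultaneously block-diagonal with blocks of size at most 2). -/

import Mathlib

open scoped InnerProductSpace

open Module Submodule

section JordanAux

variable {H : Type*} [NormedAddCommGroup H] [InnerProductSpace ℂ H] [FiniteDimensional ℂ H]

private lemma jordan_finrank_span_singleton_le (v : H) :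
    finrank ℂ (Submodule.span ℂ ({v} : Set H)) ≤ 1 := by
  by_cases hv : v = 0
  · rw [hv, Submodule.span_zero_singleton]
    simp
  · exact le_of_eq (finrank_span_singleton hv)

/-- Key step: inside any nonzero invariant subspace there is a nonzero invariant
subspace of dimension at most 2. -/
private lemma jordan_key (U V : H →ₗ[ℂ] H)
    (hU2 : ∀ x, U (U x) = x) (hV2 : ∀ x, V (V x) = x)
    (K : Submodule ℂ H) (hK : K ≠ ⊥)
    (hUK : ∀ x ∈ K, U x ∈ K) (hVK : ∀ x ∈ K, V x ∈ K) :
    ∃ S : Submodule ℂ H, S ≠ ⊥ ∧ S ≤ K ∧ finrank ℂ S ≤ 2 ∧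
      (∀ x ∈ S, U x ∈ S) ∧ (∀ x ∈ S, V x ∈ S) := by
  classical
  set W : H →ₗ[ℂ] H := U ∘ₗ V + V ∘ₗ U with hWdef
  have hWapp : ∀ x, W x = U (V x) + V (U x) := fun x => rfl
  have hWK : ∀ x ∈ K, W x ∈ K := fun x hx =>
    K.add_mem (hUK _ (hVK _ hx)) (hVK _ (hUK _ hx))
  haveI : Nontrivial K := Submodule.nontrivial_iff_ne_bot.mpr hK
  set f : K →ₗ[ℂ] K := W.restrict hWK with hfdef
  obtain ⟨μ, hμ⟩ := Module.End.exists_eigenvalue f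
  set E : Submodule ℂ K := Module.End.eigenspace f μ with hEdef
  have hE : E ≠ ⊥ := hμ
  haveI : Nontrivial E := Submodule.nontrivial_iff_ne_bot.mpr hE
  set g : K →ₗ[ℂ] K := U.restrict hUK with hgdef
  have hcomm : ∀ x : K, f (g x) = g (f x) := by
    intro x
    apply Subtype.ext
    show W (U (x : H)) = U (W (x : H))
    simp only [hWapp, map_add, hU2]
    abel
  have hgE : ∀ x ∈ E, g x ∈ E := by
    intro x hx
    rw [hEdef, Module.End.mem_eigenspace_iff] at hx ⊢
    rw [hcomm, hx, map_smul]
  set g' : E →ₗ[ℂ] E := g.restrict hgE with hg'def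
  obtain ⟨c, hc⟩ := Module.End.exists_eigenvalue g'
  obtain ⟨x, hx⟩ := hc.exists_hasEigenvector
  set z : H := ((x : K) : H) with hzdef
  have hzK : z ∈ K := (x : K).2
  have hz0 : z ≠ 0 := by
    intro h
    apply hx.2
    ext
    exact h
  have hUz : U z = c • z := by
    have h := hx.apply_eq_smul
    calc U z = ((g' x : K) : H) := rfl
      _ = (((c • x : E) : K) : H) := by rw [h]
      _ = c • z := rfl
  have hWz : W z = μ • z := by
    have h : f (x : K) = μ • (x : K) := Module.End.mem_eigenspace_iff.mp x.2
    calc W z = ((f (x : K)) : H) := rfl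
      _ = (((μ • (x : K)) : K) : H) := by rw [h]
      _ = μ • z := rfl
  have hUVz : U (V z) = μ • z - c • V z := by
    have h := hWapp z
    rw [hWz] at h
    have hVUz : V (U z) = c • V z := by rw [hUz, map_smul]
    rw [hVUz] at h
    exact eq_sub_of_add_eq h.symm
  refine ⟨Submodule.span ℂ ({z, V z} : Set H), ?_, ?_, ?_, ?_, ?_⟩
  · intro h
    exact hz0 (Submodule.span_eq_bot.mp h z (by simp))
  · rw [Submodule.span_le]
    rintro y hy
    rcases hy with rfl | hy
    · exact hzK
    · rw [Set.mem_singleton_iff] at hy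
      subst hy
      exact hVK _ hzK
  · have h1 : (({z, V z} : Set H)) = insert z ({V z} : Set H) := rfl
    rw [h1, Submodule.span_insert]
    refine le_trans ?_ (add_le_add (jordan_finrank_span_singleton_le z)
      (jordan_finrank_span_singleton_le (V z)))
    have := Submodule.finrank_sup_add_finrank_inf_eq
      (Submodule.span ℂ ({z} : Set H)) (Submodule.span ℂ ({V z} : Set H))
    omega
  · have hmap : Submodule.map U (Submodule.span ℂ ({z, V z} : Set H)) ≤
        Submodule.span ℂ ({z, V z} : Set H) := by
      rw [Submodule.map_span_le]
      rintro m hm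
      have hz_mem : z ∈ Submodule.span ℂ ({z, V z} : Set H) :=
        Submodule.subset_span (by simp)
      have hVz_mem : V z ∈ Submodule.span ℂ ({z, V z} : Set H) :=
        Submodule.subset_span (by simp)
      rcases hm with rfl | hm
      · rw [hUz]; exact Submodule.smul_mem _ _ hz_mem
      · rw [Set.mem_singleton_iff] at hm
        subst hm
        rw [hUVz]
        exact Submodule.sub_mem _ (Submodule.smul_mem _ _ hz_mem)
          (Submodule.smul_mem _ _ hVz_mem)
    exact fun y hy => hmap ⟨y, hy, rfl⟩
  · have hmap : Submodule.map V (Submodule.span ℂ ({z, V z} : Set H)) ≤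
        Submodule.span ℂ ({z, V z} : Set H) := by
      rw [Submodule.map_span_le]
      rintro m hm
      have hz_mem : z ∈ Submodule.span ℂ ({z, V z} : Set H) :=
        Submodule.subset_span (by simp)
      have hVz_mem : V z ∈ Submodule.span ℂ ({z, V z} : Set H) :=
        Submodule.subset_span (by simp)
      rcases hm with rfl | hm
      · exact hVz_mem
      · rw [Set.mem_singleton_iff] at hm
        subst hm
        rw [hV2]
        exact hz_mem
    exact fun y hy => hmap ⟨y, hy, rfl⟩

/-- Recursive decomposition of an invariant subspace into orthogonal invariant
subspaces of dimension at most 2. -/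
private lemma jordan_decomp (U V : H →ₗ[ℂ] H)
    (hU2 : ∀ x, U (U x) = x) (hV2 : ∀ x, V (V x) = x)
    (hUsym : ∀ x y : H, ⟪U x, y⟫_ℂ = ⟪x, U y⟫_ℂ)
    (hVsym : ∀ x y : H, ⟪V x, y⟫_ℂ = ⟪x, V y⟫_ℂ) :
    ∀ (n : ℕ) (K : Submodule ℂ H), finrank ℂ K ≤ n →
      (∀ x ∈ K, U x ∈ K) → (∀ x ∈ K, V x ∈ K) →
      ∃ (m : ℕ) (Vf : Fin m → Submodule ℂ H),
        (⨆ i, Vf i) = K ∧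
        (∀ i, Vf i ≤ K) ∧
        (∀ i j, i ≠ j → ∀ x ∈ Vf i, ∀ y ∈ Vf j, ⟪x, y⟫_ℂ = 0) ∧
        (∀ i, finrank ℂ (Vf i) ≤ 2) ∧
        (∀ i, ∀ x ∈ Vf i, U x ∈ Vf i) ∧ (∀ i, ∀ x ∈ Vf i, V x ∈ Vf i) := by
  intro n
  induction n with
  | zero =>
    intro K hK _ _
    have hKbot : K = ⊥ := Submodule.finrank_eq_zero.mp (Nat.le_zero.mp hK)
    subst hKbot
    exact ⟨0, Fin.elim0, by simp, fun i => i.elim0, fun i => i.elim0,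
      fun i => i.elim0, fun i => i.elim0, fun i => i.elim0⟩
  | succ n ih =>
    intro K hK hUK hVK
    by_cases hbot : K = ⊥
    · subst hbot
      exact ⟨0, Fin.elim0, by simp, fun i => i.elim0, fun i => i.elim0,
        fun i => i.elim0, fun i => i.elim0, fun i => i.elim0⟩
    obtain ⟨S, hS0, hSK, hSrk, hSU, hSV⟩ := jordan_key U V hU2 hV2 K hbot hUK hVK
    set K' : Submodule ℂ H := Sᗮ ⊓ K with hK'def
    have hK'U : ∀ x ∈ K', U x ∈ K' := by
      intro x hx
      obtain ⟨hx1, hx2⟩ := Submodule.mem_inf.mp hx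
      refine Submodule.mem_inf.mpr ⟨?_, hUK _ hx2⟩
      rw [Submodule.mem_orthogonal]
      intro u hu
      rw [← hUsym u x]
      exact (Submodule.mem_orthogonal _ _).mp hx1 _ (hSU u hu)
    have hK'V : ∀ x ∈ K', V x ∈ K' := by
      intro x hx
      obtain ⟨hx1, hx2⟩ := Submodule.mem_inf.mp hx
      refine Submodule.mem_inf.mpr ⟨?_, hVK _ hx2⟩
      rw [Submodule.mem_orthogonal]
      intro u hu
      rw [← hVsym u x]
      exact (Submodule.mem_orthogonal _ _).mp hx1 _ (hSV u hu)
    have hrkeq : finrank ℂ S + finrank ℂ K' = finrank ℂ K :=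
      Submodule.finrank_add_inf_finrank_orthogonal hSK
    have hSpos : 0 < finrank ℂ S := by
      haveI : Nontrivial S := Submodule.nontrivial_iff_ne_bot.mpr hS0
      exact finrank_pos
    have hK'le : finrank ℂ K' ≤ n := by omega
    obtain ⟨m, Vf', hsup', hle', horth', hrk', hU', hV'⟩ := ih K' hK'le hK'U hK'V
    have hsupK : S ⊔ K' = K := Submodule.sup_orthogonal_inf_of_hasOrthogonalProjection hSK
    refine ⟨m + 1, Fin.cons S Vf', ?_, ?_, ?_, ?_, ?_, ?_⟩
    · apply le_antisymm
      · refine iSup_le ?_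
        refine Fin.cases ?_ ?_
        · exact hSK
        · intro i
          rw [Fin.cons_succ]
          exact le_trans (hle' i) inf_le_right
      · rw [← hsupK]
        refine sup_le ?_ ?_
        · exact le_iSup_of_le 0 (by rw [Fin.cons_zero])
        · rw [← hsup']
          refine iSup_le fun i => le_iSup_of_le i.succ ?_
          rw [Fin.cons_succ]
    · refine Fin.cases ?_ ?_
      · exact hSK
      · intro i
        rw [Fin.cons_succ]
        exact le_trans (hle' i) inf_le_right
    · have horthS : ∀ (j : Fin m) (x : H), x ∈ S → ∀ y ∈ Vf' j, ⟪x, y⟫_ℂ = 0 := by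
        intro j x hx y hy
        have hy' : y ∈ Sᗮ := (le_trans (hle' j) inf_le_left) hy
        exact (Submodule.mem_orthogonal _ _).mp hy' x hx
      intro i j hij
      rcases Fin.eq_zero_or_eq_succ i with rfl | ⟨i', rfl⟩ <;>
        rcases Fin.eq_zero_or_eq_succ j with rfl | ⟨j', rfl⟩
      · exact absurd rfl hij
      · intro x hx y hy
        rw [Fin.cons_zero] at hx
        rw [Fin.cons_succ] at hy
        exact horthS j' x hx y hy
      · intro x hx y hy
        rw [Fin.cons_succ] at hx
        rw [Fin.cons_zero] at hy
        have h := horthS i' y hy x hx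
        rw [← inner_conj_symm, h, map_zero]
      · intro x hx y hy
        rw [Fin.cons_succ] at hx hy
        refine horth' i' j' (fun h => hij (by rw [h])) x hx y hy
    · refine Fin.cases ?_ ?_
      · exact hSrk
      · intro i
        rw [Fin.cons_succ]
        exact hrk' i
    · refine Fin.cases ?_ ?_
      · exact hSU
      · intro i
        rw [Fin.cons_succ]
        exact hU' i
    · refine Fin.cases ?_ ?_
      · exact hSV
      · intro i
        rw [Fin.cons_succ]
        exact hV' i

end JordanAux

/-- Jordan/Masanes lemma: two pairs of complementary orthogonal projections on a
finite-dimensional complex Hilbert space are simultaneously block-diagonal with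
blocks of dimension at most 2: there is an internal orthogonal direct sum
decomposition into subspaces of dimension ≤ 2, each invariant under all four
projections. -/
theorem jordan_lemma_two_binary_measurements
    {H : Type*} [NormedAddCommGroup H] [InnerProductSpace ℂ H]
    [FiniteDimensional ℂ H]
    (P0p P0m P1p P1m : H →ₗ[ℂ] H)
    (h0p : P0p ∘ₗ P0p = P0p) (h0m : P0m ∘ₗ P0m = P0m)
    (h1p : P1p ∘ₗ P1p = P1p) (h1m : P1m ∘ₗ P1m = P1m)
    (h0psym : ∀ x y : H, ⟪P0p x, y⟫_ℂ = ⟪x, P0p y⟫_ℂ)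
    (h0msym : ∀ x y : H, ⟪P0m x, y⟫_ℂ = ⟪x, P0m y⟫_ℂ)
    (h1psym : ∀ x y : H, ⟪P1p x, y⟫_ℂ = ⟪x, P1p y⟫_ℂ)
    (h1msym : ∀ x y : H, ⟪P1m x, y⟫_ℂ = ⟪x, P1m y⟫_ℂ)
    (hsum0 : P0p + P0m = LinearMap.id) (hsum1 : P1p + P1m = LinearMap.id) :
    ∃ (ι : Type) (_ : Fintype ι) (_ : DecidableEq ι) (V : ι → Submodule ℂ H),
      DirectSum.IsInternal V ∧
      (∀ i j, i ≠ j → ∀ x ∈ V i, ∀ y ∈ V j, ⟪x, y⟫_ℂ = 0) ∧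
      (∀ i, Module.finrank ℂ (V i) ≤ 2) ∧
      (∀ i, Submodule.map P0p (V i) ≤ V i ∧ Submodule.map P0m (V i) ≤ V i ∧
            Submodule.map P1p (V i) ≤ V i ∧ Submodule.map P1m (V i) ≤ V i) := by
  classical
  have hP0 : ∀ x : H, P0p (P0p x) = P0p x := fun x => LinearMap.ext_iff.mp h0p x
  have hP1 : ∀ x : H, P1p (P1p x) = P1p x := fun x => LinearMap.ext_iff.mp h1p x
  set U : H →ₗ[ℂ] H := (2 : ℂ) • P0p - LinearMap.id with hUdef
  set V0 : H →ₗ[ℂ] H := (2 : ℂ) • P1p - LinearMap.id with hVdef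
  have hUapp : ∀ x : H, U x = (2 : ℂ) • P0p x - x := fun x => rfl
  have hVapp : ∀ x : H, V0 x = (2 : ℂ) • P1p x - x := fun x => rfl
  have hU2 : ∀ x, U (U x) = x := by
    intro x
    rw [hUapp, hUapp, map_sub, map_smul, hP0]
    module
  have hV2 : ∀ x, V0 (V0 x) = x := by
    intro x
    rw [hVapp, hVapp, map_sub, map_smul, hP1]
    module
  have hUsym : ∀ x y : H, ⟪U x, y⟫_ℂ = ⟪x, U y⟫_ℂ := by
    intro x y
    rw [hUapp, hUapp, inner_sub_left, inner_sub_right, inner_smul_left, inner_smul_right,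
      h0psym]
    norm_num [Complex.conj_ofNat]
  have hVsym : ∀ x y : H, ⟪V0 x, y⟫_ℂ = ⟪x, V0 y⟫_ℂ := by
    intro x y
    rw [hVapp, hVapp, inner_sub_left, inner_sub_right, inner_smul_left, inner_smul_right,
      h1psym]
    norm_num [Complex.conj_ofNat]
  obtain ⟨m, Vf, hsup, _, horth, hrk, hUinv, hVinv⟩ :=
    jordan_decomp U V0 hU2 hV2 hUsym hVsym (finrank ℂ H) ⊤
      (le_of_eq (finrank_top ℂ H)) (fun x _ => Submodule.mem_top) (fun x _ => Submodule.mem_top)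
  have horthfam : OrthogonalFamily ℂ (fun i => Vf i) (fun i => (Vf i).subtypeₗᵢ) := by
    intro i j hij v w
    exact horth i j hij v v.2 w w.2
  have hinternal : DirectSum.IsInternal Vf :=
    DirectSum.isInternal_submodule_of_iSupIndep_of_iSup_eq_top horthfam.independent hsup
  have hP0pinv : ∀ i, ∀ x ∈ Vf i, P0p x ∈ Vf i := by
    intro i x hx
    have h : P0p x = (2⁻¹ : ℂ) • (U x + x) := by
      rw [hUapp]; module
    rw [h]
    exact Submodule.smul_mem _ _ (Submodule.add_mem _ (hUinv i x hx) hx)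
  have hP1pinv : ∀ i, ∀ x ∈ Vf i, P1p x ∈ Vf i := by
    intro i x hx
    have h : P1p x = (2⁻¹ : ℂ) • (V0 x + x) := by
      rw [hVapp]; module
    rw [h]
    exact Submodule.smul_mem _ _ (Submodule.add_mem _ (hVinv i x hx) hx)
  have hP0m : ∀ x : H, P0m x = x - P0p x := by
    intro x
    have := LinearMap.ext_iff.mp hsum0 x
    simp only [LinearMap.add_apply, LinearMap.id_apply] at this
    exact eq_sub_of_add_eq' this
  have hP1m : ∀ x : H, P1m x = x - P1p x := by
    intro x
    have := LinearMap.ext_iff.mp hsum1 x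
    simp only [LinearMap.add_apply, LinearMap.id_apply] at this
    exact eq_sub_of_add_eq' this
  refine ⟨Fin m, inferInstance, inferInstance, Vf, hinternal, horth, hrk, ?_⟩
  intro i
  refine ⟨?_, ?_, ?_, ?_⟩
  · rintro y ⟨x, hx, rfl⟩
    exact hP0pinv i x hx
  · rintro y ⟨x, hx, rfl⟩
    rw [hP0m]
    exact Submodule.sub_mem _ hx (hP0pinv i x hx)
  · rintro y ⟨x, hx, rfl⟩
    exact hP1pinv i x hx
  · rintro y ⟨x, hx, rfl⟩
    rw [hP1m]
    exact Submodule.sub_mem _ hx (hP1pinv i x hx)
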